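/- Let n be an even positive integer, p ≥ 1, and let X_1,...,X_n be i.i.d. square-integrable random vectors in ℝ^p. For each realization of (X_1,...,X_n), let M*(X) be a perfect matching of {1,...,n} that minimizes Σ_{{i,i'}∈M} ||X_i − X_{i'}||² over all perfect matchings M. Then E[ (4/n²)·Σ_{{i,i'}∈M*(X)} ||X_i − X_{i'}||² ] ≤ (4/n)·Σ_{k=1}^p Var(X_{k1}), where X_{k1} is the k-th coordinate of X_1. (This is the matched-pairs upper bound: under the matched-pairs design the expected squared imbalance E[||B_{n,p}(X)||²] equals the left-hand side.) -/

import Mathlib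

open MeasureTheory ProbabilityTheory

/-- Let `X₁,…,Xₙ` (`n = 2m` even) be i.i.d. square-integrable random
vectors in `ℝᵖ`, and for each realization let `Mstar ω : Fin m × Bool ≃ Fin n` be a perfect
matching minimizing the sum of within-pair squared distances. Then the expected squared
imbalance of the matched-pairs design,
`E[(4/n²) ∑_{pairs of Mstar} ‖X_i − X_{i'}‖²]`, is at most `(4/n) ∑ₖ Var(X_{k1})`. -/
theorem matched_pairs_imbalance_upper_bound
    {Ω : Type*} [MeasurableSpace Ω] (P : Measure Ω) [IsProbabilityMeasure P]
    (m n p : ℕ) (hm : 0 < m) (hnm : n = 2 * m) (hp : 0 < p)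
    (X : Fin n → Ω → EuclideanSpace ℝ (Fin p))
    (hXmeas : ∀ i, Measurable (X i))
    (hXindep : iIndepFun X P)
    (hXident : ∀ i, Measure.map (X i) P = Measure.map (X ⟨0, by omega⟩) P)
    (hXL2 : ∀ i, MemLp (X i) 2 P)
    (Mstar : Ω → (Fin m × Bool ≃ Fin n))
    (hmin : ∀ ω (e : Fin m × Bool ≃ Fin n),
      ∑ j : Fin m, ‖X (Mstar ω (j, false)) ω - X (Mstar ω (j, true)) ω‖ ^ 2
        ≤ ∑ j : Fin m, ‖X (e (j, false)) ω - X (e (j, true)) ω‖ ^ 2) :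
    ∫ ω, (4 / (n : ℝ) ^ 2) *
        ∑ j : Fin m, ‖X (Mstar ω (j, false)) ω - X (Mstar ω (j, true)) ω‖ ^ 2 ∂P
      ≤ (4 / (n : ℝ)) * ∑ k, variance (fun ω => X ⟨0, by omega⟩ ω k) P := by
  have hn0 : 0 < n := by omega
  set i0 : Fin n := ⟨0, by omega⟩ with hi0
  -- coordinates are in L²
  have coordL2 : ∀ (i : Fin n) (k : Fin p), MemLp (fun ω => X i ω k) 2 P := fun i k =>
    (EuclideanSpace.proj k : EuclideanSpace ℝ (Fin p) →L[ℝ] ℝ).comp_memLp' (hXL2 i)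
  have projmeas : ∀ k : Fin p, Measurable (fun v : EuclideanSpace ℝ (Fin p) => v k) :=
    fun k => (EuclideanSpace.proj k : EuclideanSpace ℝ (Fin p) →L[ℝ] ℝ).continuous.measurable
  -- transfer of moments via identical distribution
  have transfer : ∀ (i : Fin n) (g : EuclideanSpace ℝ (Fin p) → ℝ), Measurable g →
      ∫ ω, g (X i ω) ∂P = ∫ ω, g (X i0 ω) ∂P := by
    intro i g hg
    rw [← integral_map (hXmeas i).aemeasurable hg.aestronglyMeasurable, hXident i,
      integral_map (hXmeas _).aemeasurable hg.aestronglyMeasurable]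
  -- variance of each coordinate does not depend on the index
  have hvar : ∀ (i : Fin n) (k : Fin p),
      variance (fun ω => X i ω k) P = variance (fun ω => X i0 ω k) P := by
    intro i k
    rw [variance_eq_sub (coordL2 i k), variance_eq_sub (coordL2 i0 k)]
    have h1 := transfer i (fun v => v k) (projmeas k)
    have h2 := transfer i (fun v => (v k) ^ 2) ((projmeas k).pow_const 2)
    simp only [Pi.pow_apply]
    rw [h1, h2]
  -- norm squared expansion
  have hnorm : ∀ (a b : Fin n) (ω : Ω),
      ‖X a ω - X b ω‖ ^ 2 = ∑ k, (X a ω k - X b ω k) ^ 2 := by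
    intro a b ω
    rw [EuclideanSpace.norm_eq, Real.sq_sqrt (by positivity)]
    simp [Real.norm_eq_abs, sq_abs]
  have hsq : ∀ (a b : Fin n) (k : Fin p),
      Integrable (fun ω => (X a ω k - X b ω k) ^ 2) P := fun a b k =>
    ((coordL2 a k).sub (coordL2 b k)).integrable_sq
  -- integrability of the squared distance of a pair
  have hInt : ∀ a b : Fin n, Integrable (fun ω => ‖X a ω - X b ω‖ ^ 2) P := by
    intro a b
    simp only [hnorm]
    refine integrable_finset_sum _ fun k _ => ?_
    exact hsq a b k
  -- expected squared distance of a pair with distinct indices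
  have hpair : ∀ a b : Fin n, a ≠ b →
      ∫ ω, ‖X a ω - X b ω‖ ^ 2 ∂P
        = 2 * ∑ k, variance (fun ω => X i0 ω k) P := by
    intro a b hab
    simp only [hnorm]
    rw [integral_finset_sum _ fun k _ => hsq a b k, Finset.mul_sum]
    refine Finset.sum_congr rfl fun k _ => ?_
    have hU := coordL2 a k
    have hW := coordL2 b k
    have hUW : MemLp ((fun ω => X a ω k) - fun ω => X b ω k) 2 P := hU.sub hW
    have hind : IndepFun (fun ω => X a ω k) (fun ω => X b ω k) P :=
      (hXindep.indepFun hab).comp (projmeas k) (projmeas k)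
    have hvd := variance_eq_sub hUW
    have hmean : ∫ ω, (X a ω k - X b ω k) ∂P = 0 := by
      rw [integral_sub (hU.integrable one_le_two) (hW.integrable one_le_two),
        transfer a (fun v => v k) (projmeas k), transfer b (fun v => v k) (projmeas k)]
      ring
    have hvsub : variance ((fun ω => X a ω k) - fun ω => X b ω k) P
        = 2 * variance (fun ω => X i0 ω k) P := by
      rw [sub_eq_add_neg]
      rw [IndepFun.variance_add hU hW.neg (hind.comp measurable_id measurable_neg)]
      have hneg : (-fun ω => X b ω k) = fun ω => (-1 : ℝ) * X b ω k := by
        funext ω; simp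
      rw [hneg, variance_const_mul, hvar a k, hvar b k]
      ring
    have hexp : ∫ ω, ((fun ω => X a ω k) - fun ω => X b ω k) ω ^ 2 ∂P
        = ∫ ω, (X a ω k - X b ω k) ^ 2 ∂P := by
      simp [Pi.sub_apply]
    simp only [Pi.pow_apply, Pi.sub_apply] at hvd
    rw [hmean] at hvd
    simp at hvd
    rw [← hvd, hvsub]
  -- the fixed matching
  have e0 : Fin m × Bool ≃ Fin n :=
    ((Equiv.prodCongr (Equiv.refl (Fin m)) finTwoEquiv.symm).trans finProdFinEquiv).trans
      (finCongr (by omega))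
  have he0 : ∀ j : Fin m, e0 (j, false) ≠ e0 (j, true) := by
    intro j h
    simpa using e0.injective h
  have hnonneg : (0 : ℝ) ≤ 4 / (n : ℝ) ^ 2 := by positivity
  have hgInt : Integrable
      (fun ω => (4 / (n : ℝ) ^ 2) *
        ∑ j : Fin m, ‖X (e0 (j, false)) ω - X (e0 (j, true)) ω‖ ^ 2) P :=
    (integrable_finset_sum _ fun j _ => hInt _ _).const_mul _
  have key : ∫ ω, (4 / (n : ℝ) ^ 2) *
        ∑ j : Fin m, ‖X (Mstar ω (j, false)) ω - X (Mstar ω (j, true)) ω‖ ^ 2 ∂P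
      ≤ ∫ ω, (4 / (n : ℝ) ^ 2) *
        ∑ j : Fin m, ‖X (e0 (j, false)) ω - X (e0 (j, true)) ω‖ ^ 2 ∂P := by
    refine integral_mono_of_nonneg (ae_of_all _ fun ω => ?_) hgInt (ae_of_all _ fun ω => ?_)
    · have : (0:ℝ) ≤ ∑ j : Fin m, ‖X (Mstar ω (j, false)) ω - X (Mstar ω (j, true)) ω‖ ^ 2 :=
        Finset.sum_nonneg fun j _ => by positivity
      positivity
    · exact mul_le_mul_of_nonneg_left (hmin ω e0) hnonneg
  refine key.trans_eq ?_
  rw [integral_const_mul, integral_finset_sum _ fun j _ => hInt _ _]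
  rw [Finset.sum_congr rfl fun j _ => hpair _ _ (he0 j)]
  rw [Finset.sum_const, Finset.card_univ, Fintype.card_fin, nsmul_eq_mul]
  subst hnm
  have hm' : (m : ℝ) ≠ 0 := by exact_mod_cast hm.ne'
  push_cast
  field_simp
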